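/- (Theorem 3.2(ii), deterministic core.) Let q ∈ (1, ∞). Under the Dantzig-selector hypotheses, with h := θ₀ − θ̂, S := |T₀|, K₄ := 4/ν and ε := max_{i,j} |(V(θ₀) − J)_{ij}|: if κ(T₀; J)² > 4 S ε and F_q(T₀; J) > 0, then ‖θ̂ − θ₀‖_q ≤ (2 S^{1/q} / F_q(T₀; J)) · ( ε · 4 K₄ S γ / (κ(T₀; J)² − 4 S ε) + K₄ γ ). -/

import Mathlib

open Finset

/-- ℓ₁ norm on `Fin p → ℝ`. -/
noncomputable def l1 {p : ℕ} (v : Fin p → ℝ) : ℝ := ∑ i, |v i|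

/-- ℓ₁ norm of the subvector indexed by `T`. -/
noncomputable def l1on {p : ℕ} (T : Finset (Fin p)) (v : Fin p → ℝ) : ℝ := ∑ i ∈ T, |v i|

/-- ℓ₂ norm on `Fin p → ℝ`. -/
noncomputable def l2 {p : ℕ} (v : Fin p → ℝ) : ℝ := Real.sqrt (∑ i, (v i) ^ 2)

/-- ℓ_∞ norm on `Fin p → ℝ`. -/
noncomputable def linf {p : ℕ} (v : Fin p → ℝ) : ℝ := ⨆ i, |v i|

/-- ℓ_q norm on `Fin p → ℝ` for real `q ≥ 1`. -/
noncomputable def lqnorm {p : ℕ} (q : ℝ) (v : Fin p → ℝ) : ℝ := (∑ i, |v i| ^ q) ^ (1 / q)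

/-- Quadratic form `hᵀ J h`. -/
noncomputable def quadForm {p : ℕ} (J : Matrix (Fin p) (Fin p) ℝ) (h : Fin p → ℝ) : ℝ :=
  ∑ i, ∑ j, h i * J i j * h j

/-- The cone `C_T = {h : ‖h_{Tᶜ}‖₁ ≤ ‖h_T‖₁}`. -/
def cone {p : ℕ} (T : Finset (Fin p)) : Set (Fin p → ℝ) := {h | l1on Tᶜ h ≤ l1on T h}

/-- Compatibility factor `κ(T; J)`. -/
noncomputable def kappa {p : ℕ} (T : Finset (Fin p)) (J : Matrix (Fin p) (Fin p) ℝ) : ℝ :=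
  sInf {r | ∃ h : Fin p → ℝ, h ≠ 0 ∧ h ∈ cone T ∧
    r = Real.sqrt T.card * Real.sqrt (quadForm J h) / l1on T h}

/-- Restricted eigenvalue `RE(T; J)`. -/
noncomputable def RE {p : ℕ} (T : Finset (Fin p)) (J : Matrix (Fin p) (Fin p) ℝ) : ℝ :=
  sInf {r | ∃ h : Fin p → ℝ, h ≠ 0 ∧ h ∈ cone T ∧
    r = Real.sqrt (quadForm J h) / l2 h}

/-- Weak cone invertibility factor at `q = ∞`, `F_∞(T; J)`. -/
noncomputable def Finf {p : ℕ} (T : Finset (Fin p)) (J : Matrix (Fin p) (Fin p) ℝ) : ℝ :=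
  sInf {r | ∃ h : Fin p → ℝ, h ≠ 0 ∧ h ∈ cone T ∧
    r = Real.sqrt (quadForm J h) / linf h}

/-- Weak cone invertibility factor `F_q(T; J)` for `q ∈ [1,∞)`
(with the quadratic form without square root, as in the paper's proofs). -/
noncomputable def Fq {p : ℕ} (q : ℝ) (T : Finset (Fin p)) (J : Matrix (Fin p) (Fin p) ℝ) : ℝ :=
  sInf {r | ∃ h : Fin p → ℝ, h ≠ 0 ∧ h ∈ cone T ∧
    r = (T.card : ℝ) ^ (1 / q) * quadForm J h / (l1on T h * lqnorm q h)}

/-- `g(x) = (e^{2x} - 1)/x` for `x ≠ 0`, `g(0) = 2`. -/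
noncomputable def g (x : ℝ) : ℝ := if x = 0 then 2 else (Real.exp (2 * x) - 1) / x

/-- Gradient of the log-quasi-likelihood (divided by `n`), with `b = 0`, `Δ = 1/n`:
`ψ(θ)_i = (1/(nΔ)) Σ_k z_{k,i}(e^{-2⟨θ,z_k⟩}(x_k - x_{k-1})² - Δ)`. -/
noncomputable def psiD {n p : ℕ} (x : Fin (n + 1) → ℝ) (z : Fin n → Fin p → ℝ)
    (θ : Fin p → ℝ) (i : Fin p) : ℝ :=
  (1 / ((n : ℝ) * (1 / n))) * ∑ k, z k i *
    (Real.exp (-2 * ∑ j, θ j * z k j) * (x k.succ - x k.castSucc) ^ 2 - 1 / n)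

/-- Negative Hessian (divided by `n`):
`V(θ) = (2/(nΔ)) Σ_k e^{-2⟨θ,z_k⟩}(x_k - x_{k-1})² z_k z_kᵀ`. -/
noncomputable def VD {n p : ℕ} (x : Fin (n + 1) → ℝ) (z : Fin n → Fin p → ℝ)
    (θ : Fin p → ℝ) : Matrix (Fin p) (Fin p) ℝ := fun i j =>
  (2 / ((n : ℝ) * (1 / n))) * ∑ k, Real.exp (-2 * ∑ l, θ l * z k l) *
    (x k.succ - x k.castSucc) ^ 2 * z k i * z k j

/-- `J = (2/n) Σ_k z_k z_kᵀ`. -/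
noncomputable def JD {n p : ℕ} (z : Fin n → Fin p → ℝ) : Matrix (Fin p) (Fin p) ℝ :=
  fun i j => (2 / (n : ℝ)) * ∑ k, z k i * z k j

/-- `ε = max_{i,j} |(V(θ) - J)_{ij}|`. -/
noncomputable def epsD {n p : ℕ} (x : Fin (n + 1) → ℝ) (z : Fin n → Fin p → ℝ)
    (θ : Fin p → ℝ) : ℝ :=
  ⨆ i, ⨆ j, |VD x z θ i j - JD z i j|


lemma g_pos' (x : ℝ) : 0 < g x := by
  unfold g
  split
  · norm_num
  · rename_i hx
    rcases lt_or_gt_of_ne hx with h | h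
    · apply div_pos_of_neg_of_neg _ h
      simp only [sub_neg]
      exact Real.exp_lt_one_iff.mpr (by linarith)
    · apply div_pos _ h
      simp only [sub_pos]
      exact Real.one_lt_exp_iff.mpr (by linarith)

lemma g_mul_sq (w : ℝ) : g (-w) * w ^ 2 = w * (1 - Real.exp (-2 * w)) := by
  unfold g
  rcases eq_or_ne w 0 with h | h
  · simp [h]
  · rw [if_neg (by simpa using h)]
    have h2 : 2 * -w = -2 * w := by ring
    rw [h2, div_mul_eq_mul_div, div_eq_iff (neg_ne_zero.mpr h)]
    ring

lemma sum_swap_lin {p n : ℕ} (h : Fin p → ℝ) (z : Fin n → Fin p → ℝ) (d : Fin n → ℝ) :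
    ∑ i, h i * ∑ k, z k i * d k = ∑ k, d k * ∑ i, h i * z k i := by
  simp only [Finset.mul_sum]
  rw [Finset.sum_comm]
  exact Finset.sum_congr rfl fun k _ => Finset.sum_congr rfl fun i _ => by ring

lemma quad_expand {p n : ℕ} (c : ℝ) (u : Fin n → ℝ) (z : Fin n → Fin p → ℝ) (h : Fin p → ℝ) :
    ∑ i, ∑ j, h i * (c * ∑ k, u k * z k i * z k j) * h j
      = c * ∑ k, u k * (∑ i, h i * z k i) ^ 2 := by
  have step1 : ∀ i j : Fin p, h i * (c * ∑ k, u k * z k i * z k j) * h j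
      = ∑ k, c * (u k * ((h i * z k i) * (h j * z k j))) := by
    intro i j
    rw [Finset.mul_sum, Finset.mul_sum, Finset.sum_mul]
    exact Finset.sum_congr rfl fun k _ => by ring
  have step3 : ∀ k : Fin n, c * (u k * ((∑ i, h i * z k i) * (∑ j, h j * z k j)))
      = ∑ i, ∑ j, c * (u k * ((h i * z k i) * (h j * z k j))) := by
    intro k
    rw [Finset.sum_mul_sum]
    simp only [Finset.mul_sum]
  calc ∑ i, ∑ j, h i * (c * ∑ k, u k * z k i * z k j) * h j
      = ∑ i, ∑ j, ∑ k, c * (u k * ((h i * z k i) * (h j * z k j))) :=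
        Finset.sum_congr rfl fun i _ => Finset.sum_congr rfl fun j _ => step1 i j
    _ = ∑ i, ∑ k : Fin n, ∑ j, c * (u k * ((h i * z k i) * (h j * z k j))) :=
        Finset.sum_congr rfl fun i _ =>
          Finset.sum_comm (s := Finset.univ) (t := Finset.univ)
            (f := fun j k => c * (u k * ((h i * z k i) * (h j * z k j))))
    _ = ∑ k : Fin n, ∑ i, ∑ j, c * (u k * ((h i * z k i) * (h j * z k j))) :=
        Finset.sum_comm (s := Finset.univ) (t := Finset.univ)
          (f := fun i k => ∑ j, c * (u k * ((h i * z k i) * (h j * z k j))))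
    _ = c * ∑ k, u k * (∑ i, h i * z k i) ^ 2 := by
        rw [Finset.mul_sum]
        refine Finset.sum_congr rfl fun k _ => ?_
        rw [sq]
        exact (step3 k).symm

lemma quad_expand' {p n : ℕ} (c : ℝ) (z : Fin n → Fin p → ℝ) (h : Fin p → ℝ) :
    ∑ i, ∑ j, h i * (c * ∑ k, z k i * z k j) * h j
      = c * ∑ k, (∑ i, h i * z k i) ^ 2 := by
  have := quad_expand c (fun _ => (1:ℝ)) z h
  simp only [one_mul] at this
  rw [← this]

lemma quadJD_nonneg {p n : ℕ} (z : Fin n → Fin p → ℝ) (h : Fin p → ℝ) :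
    0 ≤ quadForm (JD z) h := by
  unfold quadForm JD
  rw [quad_expand']
  positivity

set_option maxHeartbeats 2000000 in
/-- Theorem 3.2(ii), deterministic core: for `q ∈ (1,∞)`, with `S := |T₀|`, `K₄ := 4/ν`
and `ε := max_{i,j} |(V(θ₀) - J)_{ij}|`: if `κ(T₀;J)² > 4Sε` and `F_q(T₀;J) > 0`, then
`‖θ̂ - θ₀‖_q ≤ (2S^{1/q}/F_q(T₀;J)) (ε · 4K₄Sγ/(κ(T₀;J)² - 4Sε) + K₄γ)`. -/
theorem theorem_3_2_ii
    (n p : ℕ) (hn : 0 < n) (hp : 0 < p)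
    (C : ℝ) (hC : 0 < C)
    (x : Fin (n + 1) → ℝ) (z : Fin n → Fin p → ℝ)
    (hz : ∀ k i, |z k i| ≤ C)
    (θ₀ θhat : Fin p → ℝ)
    (ν : ℝ) (hν : IsLeast (g '' Set.Icc (-(2 * C * l1 θ₀)) (2 * C * l1 θ₀)) ν)
    (γ : ℝ) (hγ : 0 < γ)
    (hfeas : linf (psiD x z θhat) ≤ γ)
    (hmin : l1 θhat ≤ l1 θ₀)
    (htrue : linf (psiD x z θ₀) ≤ γ)
    (hθ₀ : θ₀ ≠ 0) (q : ℝ) (hq : 1 < q)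
    (hκ : 4 * ((Finset.univ.filter fun j => θ₀ j ≠ 0).card : ℝ) * epsD x z θ₀ <
      kappa (Finset.univ.filter fun j => θ₀ j ≠ 0) (JD z) ^ 2)
    (hF : 0 < Fq q (Finset.univ.filter fun j => θ₀ j ≠ 0) (JD z)) :
    lqnorm q (θhat - θ₀) ≤
      2 * ((Finset.univ.filter fun j => θ₀ j ≠ 0).card : ℝ) ^ (1 / q) /
          Fq q (Finset.univ.filter fun j => θ₀ j ≠ 0) (JD z) *
        (epsD x z θ₀ *
            (4 * (4 / ν) * ((Finset.univ.filter fun j => θ₀ j ≠ 0).card : ℝ) * γ /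
              (kappa (Finset.univ.filter fun j => θ₀ j ≠ 0) (JD z) ^ 2 -
                4 * ((Finset.univ.filter fun j => θ₀ j ≠ 0).card : ℝ) * epsD x z θ₀)) +
          4 / ν * γ) := by
    classical
  set T : Finset (Fin p) := Finset.univ.filter fun j => θ₀ j ≠ 0 with hT
  set S : ℝ := (T.card : ℝ) with hSdef
  set ε : ℝ := epsD x z θ₀ with hεdef
  set κ : ℝ := kappa T (JD z) with hκdef
  set F : ℝ := Fq q T (JD z) with hFdef
  set h : Fin p → ℝ := θhat - θ₀ with hhdef
  have hq0 : q ≠ 0 := by positivity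
  have hν0 : 0 < ν := by
    obtain ⟨x₀, -, rfl⟩ := hν.1
    exact g_pos' x₀
  have hS0 : 0 ≤ S := Nat.cast_nonneg _
  have hhi : ∀ i, h i = θhat i - θ₀ i := fun i => rfl
  have hsupp : ∀ i : Fin p, i ∉ T → θ₀ i = 0 := by
    intro i hi
    by_contra hne
    exact hi (Finset.mem_filter.mpr ⟨Finset.mem_univ i, hne⟩)
  -- ‖h‖₁ ≤ 2‖θ₀‖₁
  have hl1h : l1 h ≤ 2 * l1 θ₀ := by
    have h1 : l1 h ≤ l1 θhat + l1 θ₀ := by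
      unfold l1
      rw [← Finset.sum_add_distrib]
      refine Finset.sum_le_sum fun i _ => ?_
      rw [hhi i, sub_eq_add_neg]
      exact (abs_add_le _ _).trans (by rw [abs_neg])
    linarith
  -- cone membership
  have hcone : h ∈ cone T := by
    have h1 : l1on Tᶜ h = ∑ i ∈ Tᶜ, |θhat i| := by
      unfold l1on
      refine Finset.sum_congr rfl fun i hi => ?_
      rw [hhi i, hsupp i (Finset.mem_compl.mp hi), sub_zero]
    have h2 : ∑ i ∈ T, |θhat i| + ∑ i ∈ Tᶜ, |θhat i| = l1 θhat :=
      Finset.sum_add_sum_compl T _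
    have h3 : l1 θ₀ = ∑ i ∈ T, |θ₀ i| := by
      unfold l1
      rw [← Finset.sum_add_sum_compl T fun i => |θ₀ i|]
      have : ∑ i ∈ Tᶜ, |θ₀ i| = 0 :=
        Finset.sum_eq_zero fun i hi => by rw [hsupp i (Finset.mem_compl.mp hi), abs_zero]
      rw [this, add_zero]
    have h4 : ∑ i ∈ T, |θ₀ i| - ∑ i ∈ T, |θhat i| ≤ l1on T h := by
      rw [← Finset.sum_sub_distrib]
      refine Finset.sum_le_sum fun i _ => ?_
      have := abs_sub_abs_le_abs_sub (θ₀ i) (θhat i)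
      rw [abs_sub_comm] at this
      rw [hhi i]
      exact this
    show l1on Tᶜ h ≤ l1on T h
    linarith
  have hl1split : l1 h = l1on T h + l1on Tᶜ h := by
    unfold l1 l1on
    rw [Finset.sum_add_sum_compl T]
  have hbge : l1 h ≤ 2 * l1on T h := by
    have := hcone
    unfold cone at this
    simp only [Set.mem_setOf_eq] at this
    linarith
  have hb0 : 0 ≤ l1on T h := Finset.sum_nonneg fun i _ => abs_nonneg _
  -- ε bounds
  have hij : ∀ i j, |VD x z θ₀ i j - JD z i j| ≤ ε := by
    intro i j
    rw [hεdef]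
    unfold epsD
    exact le_trans
      (le_ciSup (f := fun j' => |VD x z θ₀ i j' - JD z i j'|)
        (Set.Finite.bddAbove (Set.finite_range _)) j)
      (le_ciSup (f := fun i => ⨆ j', |VD x z θ₀ i j' - JD z i j'|)
        (Set.Finite.bddAbove (Set.finite_range _)) i)
  have hε0 : 0 ≤ ε := (abs_nonneg _).trans (hij ⟨0, hp⟩ ⟨0, hp⟩)
  -- ψ bounds
  have hψbd : ∀ θ' : Fin p → ℝ, linf (psiD x z θ') ≤ γ → ∀ i, |psiD x z θ' i| ≤ γ := by
    intro θ' hθ' i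
    refine le_trans ?_ hθ'
    unfold linf
    exact le_ciSup (f := fun i => |psiD x z θ' i|)
      (Set.Finite.bddAbove (Set.finite_range _)) i
  -- basic numerics
  have hn0 : (n : ℝ) ≠ 0 := Nat.cast_ne_zero.mpr hn.ne'
  have hnΔ : (n : ℝ) * (1 / n) = 1 := by field_simp
  -- abbreviations for the analytic part
  set w : Fin n → ℝ := fun k => ∑ i, h i * z k i with hwdef
  set a : Fin n → ℝ := fun k => (x k.succ - x k.castSucc) ^ 2 with hadef
  set E : Fin n → ℝ := fun k => Real.exp (-2 * ∑ l, θ₀ l * z k l) with hEdef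
  -- quadratic form of V
  have hQV : quadForm (VD x z θ₀) h = 2 * ∑ k, (E k * a k) * (w k) ^ 2 := by
    unfold quadForm VD
    rw [quad_expand ((2 : ℝ) / ((n : ℝ) * (1 / n)))
      (fun k => Real.exp (-2 * ∑ l, θ₀ l * z k l) * (x k.succ - x k.castSucc) ^ 2) z h]
    have hc2 : (2 : ℝ) / ((n : ℝ) * (1 / n)) = 2 := by rw [hnΔ]; norm_num
    rw [hc2]
  -- quadratic form of J
  have hQJ : quadForm (JD z) h = (2 / (n : ℝ)) * ∑ k, (w k) ^ 2 := by
    unfold quadForm JD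
    rw [quad_expand']
  have hQJ0 : 0 ≤ quadForm (JD z) h := quadJD_nonneg z h
  -- the gradient difference
  set Dψ : ℝ := ∑ i, h i * (psiD x z θ₀ i - psiD x z θhat i) with hDdef
  have hpsi : ∀ (θ' : Fin p → ℝ) (i : Fin p), psiD x z θ' i
      = ∑ k, z k i * (Real.exp (-2 * ∑ j, θ' j * z k j) * a k - 1 / n) := by
    intro θ' i
    unfold psiD
    rw [hnΔ]
    norm_num
    rfl
  have hEhat : ∀ k, Real.exp (-2 * ∑ j, θhat j * z k j) = E k * Real.exp (-2 * w k) := by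
    intro k
    rw [hEdef, ← Real.exp_add]
    congr 1
    have hsum : ∑ j, θhat j * z k j = (∑ l, θ₀ l * z k l) + w k := by
      rw [hwdef, ← Finset.sum_add_distrib]
      refine Finset.sum_congr rfl fun j _ => ?_
      rw [hhi j]; ring
    rw [hsum]; ring
  have hA : Dψ = ∑ k, ((E k - E k * Real.exp (-2 * w k)) * a k) * w k := by
    rw [hDdef]
    have hdiff : ∀ i, psiD x z θ₀ i - psiD x z θhat i
        = ∑ k, z k i * ((E k - E k * Real.exp (-2 * w k)) * a k) := by
      intro i
      rw [hpsi θ₀ i, hpsi θhat i, ← Finset.sum_sub_distrib]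
      refine Finset.sum_congr rfl fun k _ => ?_
      rw [hEhat k, hEdef]
      ring
    calc ∑ i, h i * (psiD x z θ₀ i - psiD x z θhat i)
        = ∑ i, h i * ∑ k, z k i * ((E k - E k * Real.exp (-2 * w k)) * a k) :=
          Finset.sum_congr rfl fun i _ => by rw [hdiff i]
      _ = ∑ k, ((E k - E k * Real.exp (-2 * w k)) * a k) * w k := by
          rw [sum_swap_lin]
  -- |w k| ≤ 2C‖θ₀‖₁
  have hwbd : ∀ k, |w k| ≤ 2 * C * l1 θ₀ := by
    intro k
    calc |w k| ≤ ∑ i, |h i * z k i| := Finset.abs_sum_le_sum_abs _ _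
      _ ≤ ∑ i, |h i| * C := Finset.sum_le_sum fun i _ => by
          rw [abs_mul]
          exact mul_le_mul_of_nonneg_left (hz k i) (abs_nonneg _)
      _ = C * l1 h := by rw [← Finset.sum_mul]; unfold l1; ring
      _ ≤ C * (2 * l1 θ₀) := mul_le_mul_of_nonneg_left hl1h hC.le
      _ = 2 * C * l1 θ₀ := by ring
  have hgw : ∀ k, ν ≤ g (-(w k)) := by
    intro k
    refine hν.2 ⟨-(w k), Set.mem_Icc.mpr ⟨?_, ?_⟩, rfl⟩
    · exact neg_le_neg (abs_le.mp (hwbd k)).2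
    · exact neg_le.mpr (abs_le.mp (hwbd k)).1
  -- key pointwise inequality
  have hkey : ∀ k, ν * ((E k * a k) * (w k) ^ 2)
      ≤ ((E k - E k * Real.exp (-2 * w k)) * a k) * w k := by
    intro k
    have hEa : 0 ≤ E k * a k := mul_nonneg (Real.exp_nonneg _) (sq_nonneg _)
    have h1 : ν * (w k) ^ 2 ≤ w k * (1 - Real.exp (-2 * w k)) := by
      rw [← g_mul_sq]
      exact mul_le_mul_of_nonneg_right (hgw k) (sq_nonneg _)
    calc ν * ((E k * a k) * (w k) ^ 2) = (E k * a k) * (ν * (w k) ^ 2) := by ring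
      _ ≤ (E k * a k) * (w k * (1 - Real.exp (-2 * w k))) :=
          mul_le_mul_of_nonneg_left h1 hEa
      _ = ((E k - E k * Real.exp (-2 * w k)) * a k) * w k := by ring
  have hlow : ν * ∑ k, (E k * a k) * (w k) ^ 2 ≤ Dψ := by
    rw [hA, Finset.mul_sum]
    exact Finset.sum_le_sum fun k _ => hkey k
  -- upper bound on Dψ
  have hup : Dψ ≤ 2 * γ * l1 h := by
    have : Dψ ≤ ∑ i, |h i| * (2 * γ) := by
      refine le_trans (le_trans (le_abs_self _) (Finset.abs_sum_le_sum_abs _ _)) ?_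
      refine Finset.sum_le_sum fun i _ => ?_
      rw [abs_mul]
      refine mul_le_mul_of_nonneg_left ?_ (abs_nonneg _)
      calc |psiD x z θ₀ i - psiD x z θhat i| ≤ |psiD x z θ₀ i| + |psiD x z θhat i| := by
            rw [sub_eq_add_neg]
            exact (abs_add_le _ _).trans (by rw [abs_neg])
        _ ≤ γ + γ := add_le_add (hψbd θ₀ htrue i) (hψbd θhat hfeas i)
        _ = 2 * γ := by ring
    rw [← Finset.sum_mul] at this
    unfold l1
    linarith [this]
  -- bound on quadForm V
  have hQVbd : quadForm (VD x z θ₀) h ≤ 2 * (4 / ν) * γ * l1on T h := by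
    have hX : ν * ∑ k, (E k * a k) * (w k) ^ 2 ≤ 4 * γ * l1on T h := by
      calc ν * ∑ k, (E k * a k) * (w k) ^ 2 ≤ Dψ := hlow
        _ ≤ 2 * γ * l1 h := hup
        _ ≤ 2 * γ * (2 * l1on T h) := by
            exact mul_le_mul_of_nonneg_left hbge (by positivity)
        _ = 4 * γ * l1on T h := by ring
    rw [hQV]
    calc 2 * ∑ k, (E k * a k) * (w k) ^ 2
        = (ν * (2 * ∑ k, (E k * a k) * (w k) ^ 2)) / ν := by field_simp
      _ ≤ (8 * γ * l1on T h) / ν := by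
          refine div_le_div_of_nonneg_right ?_ hν0.le |>.trans_eq rfl
          linarith [hX]
      _ = 2 * (4 / ν) * γ * l1on T h := by ring
  -- bound difference of quadratic forms
  have hQdiff : quadForm (JD z) h - quadForm (VD x z θ₀) h ≤ ε * (l1 h) ^ 2 := by
    have heq : quadForm (JD z) h - quadForm (VD x z θ₀) h
        = ∑ i, ∑ j, h i * (JD z i j - VD x z θ₀ i j) * h j := by
      unfold quadForm
      rw [← Finset.sum_sub_distrib]
      refine Finset.sum_congr rfl fun i _ => ?_
      rw [← Finset.sum_sub_distrib]
      exact Finset.sum_congr rfl fun j _ => by ring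
    rw [heq]
    calc ∑ i, ∑ j, h i * (JD z i j - VD x z θ₀ i j) * h j
        ≤ ∑ i, ∑ j, |h i| * ε * |h j| := by
          refine Finset.sum_le_sum fun i _ => Finset.sum_le_sum fun j _ => ?_
          calc h i * (JD z i j - VD x z θ₀ i j) * h j
              ≤ |h i * (JD z i j - VD x z θ₀ i j) * h j| := le_abs_self _
            _ = |h i| * |JD z i j - VD x z θ₀ i j| * |h j| := by rw [abs_mul, abs_mul]
            _ ≤ |h i| * ε * |h j| := by
                have h5 := hij i j
                rw [abs_sub_comm] at h5
                exact mul_le_mul_of_nonneg_right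
                  (mul_le_mul_of_nonneg_left h5 (abs_nonneg _)) (abs_nonneg _)
      _ = ε * (l1 h) ^ 2 := by
          unfold l1
          rw [sq, Finset.sum_mul_sum, Finset.mul_sum]
          refine Finset.sum_congr rfl fun i _ => ?_
          rw [Finset.mul_sum]
          exact Finset.sum_congr rfl fun j _ => by ring
  -- master bound on quadForm J
  have hQbd : quadForm (JD z) h
      ≤ 2 * (4 / ν) * γ * l1on T h + 4 * ε * (l1on T h) ^ 2 := by
    have h6 : (l1 h) ^ 2 ≤ (2 * l1on T h) ^ 2 := by
      have := l1 h
      refine pow_le_pow_left₀ ?_ hbge 2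
      exact Finset.sum_nonneg fun i _ => abs_nonneg _
    nlinarith [hQdiff, hQVbd, hε0]
  -- trivial case h = 0
  by_cases hne : h = 0
  · have hLzero : lqnorm q h = 0 := by
      unfold lqnorm
      rw [hne]
      simp only [Pi.zero_apply, abs_zero]
      rw [Real.zero_rpow hq0, Finset.sum_const, smul_zero, Real.zero_rpow (by positivity)]
    rw [hLzero]
    have hD : 0 < κ ^ 2 - 4 * S * ε := by linarith
    have hK : 0 < (4 : ℝ) / ν := by positivity
    have h1 : 0 ≤ 2 * S ^ (1 / q) / F :=
      div_nonneg (mul_nonneg (by norm_num) (Real.rpow_nonneg hS0 _)) hF.le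
    have h2 : 0 ≤ ε * (4 * (4 / ν) * S * γ / (κ ^ 2 - 4 * S * ε)) :=
      mul_nonneg hε0 (div_nonneg
        (mul_nonneg (mul_nonneg (mul_nonneg (by norm_num : (0:ℝ) ≤ 4) hK.le) hS0) hγ.le)
        hD.le)
    have h3 : 0 ≤ 4 / ν * γ := le_of_lt (mul_pos hK hγ)
    exact mul_nonneg h1 (by linarith)
  -- main case h ≠ 0
  · have hl1pos : 0 < l1 h := by
      obtain ⟨i, hi⟩ := Function.ne_iff.mp hne
      exact Finset.sum_pos' (fun i _ => abs_nonneg _)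
        ⟨i, Finset.mem_univ i, abs_pos.mpr (by simpa using hi)⟩
    have hbpos : 0 < l1on T h := by linarith
    set b : ℝ := l1on T h with hbdef
    set Q : ℝ := quadForm (JD z) h with hQdef
    -- kappa bound
    have hκ0 : 0 ≤ κ := by
      apply Real.sInf_nonneg
      rintro r ⟨h', -, -, rfl⟩
      exact div_nonneg (mul_nonneg (Real.sqrt_nonneg _) (Real.sqrt_nonneg _))
        (Finset.sum_nonneg fun i _ => abs_nonneg _)
    have hκle : κ ≤ Real.sqrt S * Real.sqrt Q / b :=
      csInf_le ⟨0, by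
        rintro r ⟨h', -, -, rfl⟩
        exact div_nonneg (mul_nonneg (Real.sqrt_nonneg _) (Real.sqrt_nonneg _))
          (Finset.sum_nonneg fun i _ => abs_nonneg _)⟩
        ⟨h, hne, hcone, rfl⟩
    have hκsq : κ ^ 2 * b ^ 2 ≤ S * Q := by
      have h7 : κ ^ 2 ≤ (Real.sqrt S * Real.sqrt Q / b) ^ 2 := pow_le_pow_left₀ hκ0 hκle 2
      rw [div_pow, mul_pow, Real.sq_sqrt hS0, Real.sq_sqrt hQJ0] at h7
      calc κ ^ 2 * b ^ 2 ≤ (S * Q / b ^ 2) * b ^ 2 :=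
            mul_le_mul_of_nonneg_right h7 (by positivity)
        _ = S * Q := by field_simp
    have hD : 0 < κ ^ 2 - 4 * S * ε := by linarith
    have hbB : b ≤ 2 * (4 / ν) * S * γ / (κ ^ 2 - 4 * S * ε) := by
      rw [le_div_iff₀ hD]
      have h8 : S * Q ≤ S * (2 * (4 / ν) * γ * b + 4 * ε * b ^ 2) :=
        mul_le_mul_of_nonneg_left hQbd hS0
      have h10 : κ ^ 2 * b ^ 2 ≤ S * (2 * (4 / ν) * γ * b + 4 * ε * b ^ 2) := hκsq.trans h8
      have h9 : (b * (κ ^ 2 - 4 * S * ε)) * b ≤ (2 * (4 / ν) * S * γ) * b := by nlinarith [h10]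
      exact le_of_mul_le_mul_right h9 hbpos
    -- Fq bound
    have hLpos : 0 < lqnorm q h := by
      unfold lqnorm
      apply Real.rpow_pos_of_pos
      obtain ⟨i, hi⟩ := Function.ne_iff.mp hne
      exact Finset.sum_pos' (fun i _ => Real.rpow_nonneg (abs_nonneg _) q)
        ⟨i, Finset.mem_univ i, Real.rpow_pos_of_pos (abs_pos.mpr (by simpa using hi)) q⟩
    have hFle : F ≤ S ^ (1 / q) * Q / (b * lqnorm q h) :=
      csInf_le ⟨0, by
        rintro r ⟨h', -, hc', rfl⟩
        refine div_nonneg ?_ ?_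
        · exact mul_nonneg (Real.rpow_nonneg (Nat.cast_nonneg _) _) (quadJD_nonneg z h')
        · exact mul_nonneg (Finset.sum_nonneg fun i _ => abs_nonneg _)
            (Real.rpow_nonneg (Finset.sum_nonneg fun i _ =>
              Real.rpow_nonneg (abs_nonneg _) q) _)⟩
        ⟨h, hne, hcone, rfl⟩
    have hFmul : F * (b * lqnorm q h) ≤ S ^ (1 / q) * Q :=
      (le_div_iff₀ (mul_pos hbpos hLpos)).mp hFle
    have hSq0 : 0 ≤ S ^ (1 / q) := Real.rpow_nonneg hS0 _
    have hFL : F * lqnorm q h ≤ S ^ (1 / q) * (2 * (4 / ν) * γ + 4 * ε * b) := by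
      have h9 : (F * lqnorm q h) * b ≤ (S ^ (1 / q) * (2 * (4 / ν) * γ + 4 * ε * b)) * b := by
        calc (F * lqnorm q h) * b = F * (b * lqnorm q h) := by ring
          _ ≤ S ^ (1 / q) * Q := hFmul
          _ ≤ S ^ (1 / q) * (2 * (4 / ν) * γ * b + 4 * ε * b ^ 2) :=
              mul_le_mul_of_nonneg_left hQbd hSq0
          _ = (S ^ (1 / q) * (2 * (4 / ν) * γ + 4 * ε * b)) * b := by ring
      exact le_of_mul_le_mul_right h9 hbpos
    have hFL2 : F * lqnorm q h
        ≤ F * (2 * S ^ (1 / q) / F *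
          (ε * (4 * (4 / ν) * S * γ / (κ ^ 2 - 4 * S * ε)) + 4 / ν * γ)) := by
      have h10 : 4 * ε * b ≤ 4 * ε * (2 * (4 / ν) * S * γ / (κ ^ 2 - 4 * S * ε)) :=
        mul_le_mul_of_nonneg_left hbB (by positivity)
      have h11 : F * (2 * S ^ (1 / q) / F *
          (ε * (4 * (4 / ν) * S * γ / (κ ^ 2 - 4 * S * ε)) + 4 / ν * γ))
          = S ^ (1 / q) * (2 * (4 / ν) * γ
            + 4 * ε * (2 * (4 / ν) * S * γ / (κ ^ 2 - 4 * S * ε))) := by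
        field_simp
        ring
      rw [h11]
      calc F * lqnorm q h ≤ S ^ (1 / q) * (2 * (4 / ν) * γ + 4 * ε * b) := hFL
        _ ≤ S ^ (1 / q) * (2 * (4 / ν) * γ
            + 4 * ε * (2 * (4 / ν) * S * γ / (κ ^ 2 - 4 * S * ε))) := by
          refine mul_le_mul_of_nonneg_left ?_ hSq0
          linarith [h10]
    exact le_of_mul_le_mul_left hFL2 hF
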